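/- Let p be a prime and define f_i, b_i by the Witt-vector-style relations: b_0 = b, and ψ^{p^n}(b) = b_0^{p^n} + p b_1^{p^{n−1}} + ⋯ + p^n b_n in ℤ_p[b_0, b_1, …], with f defined by f = ψ^p(b) − b and f_i = θ_i(f) defined by the analogous relations ψ^{p^n}(f) = f_0^{p^n} + ⋯ + p^n f_n. Then for every i, f_i ≡ b_i^p − b_i modulo the ideal (p, b_0, …, b_{i−1}). -/
import Mathlib


open MvPolynomial
open Finset

/-- In `ℤ_p[b_0, b_1, …]`, let `ψ` be a ring endomorphism shifting the Witt (ghost)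
polynomials, `ψ(w_n) = w_{n+1}` (so `ψ^{pⁿ}(b) := ψ^[n] b` satisfies the ghost relations
`ψ^{pⁿ}(b) = b_0^{pⁿ} + p b_1^{p^{n−1}} + ⋯ + pⁿ b_n` with `b = b_0 = w_0`).  Let
`f = ψ^p(b) − b` and let `f_i = θ_i(f)` be determined by the analogous ghost relations
`ψ^{pⁿ}(f) = f_0^{pⁿ} + p f_1^{p^{n−1}} + ⋯ + pⁿ f_n`, i.e. `ψ^[n](f)` is the `n`-th Witt
polynomial evaluated at the `f_i`.  Then `f_i ≡ b_i^p − b_i` modulo `(p, b_0, …, b_{i−1})`. -/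
theorem stmt_9 (p : ℕ) [Fact p.Prime]
    (ψ : MvPolynomial ℕ ℤ_[p] →+* MvPolynomial ℕ ℤ_[p])
    (hψ : ∀ n : ℕ, ψ (wittPolynomial p ℤ_[p] n) = wittPolynomial p ℤ_[p] (n + 1))
    (F : ℕ → MvPolynomial ℕ ℤ_[p])
    (hF : ∀ n : ℕ,
      (⇑ψ)^[n] (ψ (X 0) - X 0) = MvPolynomial.bind₁ F (wittPolynomial p ℤ_[p] n))
    (i : ℕ) :
    F i - ((X i) ^ p - X i) ∈
      Ideal.span
        (insert (MvPolynomial.C (p : ℤ_[p]))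
          ((fun j : ℕ => (X j : MvPolynomial ℕ ℤ_[p])) '' Set.Iio i)) := by
  have hp : p.Prime := Fact.out
  -- ψ iterates of X 0 are Witt polynomials
  have hpsi : ∀ n, (⇑ψ)^[n] (X 0 : MvPolynomial ℕ ℤ_[p]) = wittPolynomial p ℤ_[p] n := by
    intro n
    induction n with
    | zero => simp
    | succ n ih => rw [Function.iterate_succ_apply', ih, hψ]
  have hF' : ∀ n, (bind₁ F) (wittPolynomial p ℤ_[p] n)
      = wittPolynomial p ℤ_[p] (n + 1) - wittPolynomial p ℤ_[p] n := by
    intro n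
    rw [← hF n]
    have : (⇑ψ)^[n] (ψ (X 0) - (X 0 : MvPolynomial ℕ ℤ_[p]))
        = (⇑ψ)^[n] (ψ (X 0)) - (⇑ψ)^[n] (X 0) := by
      induction n with
      | zero => simp
      | succ n ih => rw [Function.iterate_succ_apply', ih, map_sub,
          Function.iterate_succ_apply', Function.iterate_succ_apply']
    rw [this, ← Function.iterate_succ_apply, hpsi, hpsi]
  -- the substitution killing X_j for j < i
  set τ : MvPolynomial ℕ ℤ_[p] →ₐ[ℤ_[p]] MvPolynomial ℕ ℤ_[p] :=
    aeval (fun k => if k < i then 0 else X k) with hτ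
  set G : ℕ → MvPolynomial ℕ ℤ_[p] := fun k => τ (F k) with hG
  -- key ghost identity after substitution
  have key : ∀ n, ∑ j ∈ range (n + 1), (p : MvPolynomial ℕ ℤ_[p]) ^ j * G j ^ p ^ (n - j)
      = τ (wittPolynomial p ℤ_[p] (n + 1)) - τ (wittPolynomial p ℤ_[p] n) := by
    intro n
    have h2 := congrArg τ (hF' n)
    rw [map_sub] at h2
    rw [← h2]
    have h3 : τ ((bind₁ F) (wittPolynomial p ℤ_[p] n))
        = aeval (fun k => τ (F k)) (wittPolynomial p ℤ_[p] n) :=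
      comp_aeval_apply (f := F) τ (wittPolynomial p ℤ_[p] n)
    rw [h3, aeval_wittPolynomial]
  -- computation of τ on Witt polynomials
  have hσw : ∀ m, τ (wittPolynomial p ℤ_[p] m)
      = ∑ j ∈ range (m + 1),
          (p : MvPolynomial ℕ ℤ_[p]) ^ j * (if j < i then 0 else X j) ^ p ^ (m - j) := by
    intro m
    rw [hτ, aeval_wittPolynomial]
  have hppos : ∀ k : ℕ, p ^ k ≠ 0 := fun k => (pow_pos hp.pos k).ne'
  have hσw_lt : ∀ m, m < i → τ (wittPolynomial p ℤ_[p] m) = 0 := by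
    intro m hm
    rw [hσw]
    refine Finset.sum_eq_zero fun j hj => ?_
    rw [mem_range, Nat.lt_succ_iff] at hj
    rw [if_pos (lt_of_le_of_lt hj hm), zero_pow (hppos _), mul_zero]
  have hσw_i : τ (wittPolynomial p ℤ_[p] i) = (p : MvPolynomial ℕ ℤ_[p]) ^ i * X i := by
    rw [hσw]
    rw [Finset.sum_eq_single i]
    · rw [if_neg (lt_irrefl i), Nat.sub_self, pow_zero, pow_one]
    · intro j hj hji
      rw [mem_range, Nat.lt_succ_iff] at hj
      rw [if_pos (lt_of_le_of_ne hj hji), zero_pow (hppos _), mul_zero]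
    · intro h; exact absurd (self_mem_range_succ i) h
  have hσw_i1 : τ (wittPolynomial p ℤ_[p] (i + 1))
      = (p : MvPolynomial ℕ ℤ_[p]) ^ i * X i ^ p
        + (p : MvPolynomial ℕ ℤ_[p]) ^ (i + 1) * X (i + 1) := by
    rw [hσw, Finset.sum_range_succ, Finset.sum_range_succ]
    have h1 : ∑ j ∈ range i,
        (p : MvPolynomial ℕ ℤ_[p]) ^ j * (if j < i then 0 else X j) ^ p ^ (i + 1 - j) = 0 := by
      refine Finset.sum_eq_zero fun j hj => ?_
      rw [mem_range] at hj
      rw [if_pos hj, zero_pow (hppos _), mul_zero]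
    rw [h1, zero_add, if_neg (lt_irrefl i), if_neg (by omega : ¬ i + 1 < i),
      show i + 1 - i = 1 from by omega, pow_one, Nat.sub_self, pow_zero, pow_one, add_comm]
  -- cancellation: p^k ≠ 0
  have hpA : (p : MvPolynomial ℕ ℤ_[p]) ≠ 0 := by
    rw [← map_natCast (C : ℤ_[p] →+* MvPolynomial ℕ ℤ_[p]) p]
    rw [ne_eq, C_eq_zero]
    exact Nat.cast_ne_zero.mpr hp.ne_zero
  -- inductive computation of G k for k < i
  have hGlt : ∀ k, k < i → G k = if k + 1 < i then 0 else C (p : ℤ_[p]) * X i := by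
    intro k
    induction k using Nat.strong_induction_on with
    | _ k ih =>
      intro hk
      have hkey := key k
      rw [Finset.sum_range_succ] at hkey
      have hz : ∑ j ∈ range k, (p : MvPolynomial ℕ ℤ_[p]) ^ j * G j ^ p ^ (k - j) = 0 := by
        refine Finset.sum_eq_zero fun j hj => ?_
        rw [mem_range] at hj
        rw [ih j hj (hj.trans hk), if_pos (by omega), zero_pow (hppos _), mul_zero]
      rw [hz, zero_add, Nat.sub_self, pow_zero, pow_one, hσw_lt k hk] at hkey
      by_cases h1 : k + 1 < i
      · rw [hσw_lt _ h1, zero_sub] at hkey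
        rw [if_pos h1]
        have : (p : MvPolynomial ℕ ℤ_[p]) ^ k * G k = (p : MvPolynomial ℕ ℤ_[p]) ^ k * 0 := by
          rw [mul_zero, hkey, neg_zero]
        exact mul_left_cancel₀ (pow_ne_zero _ hpA) this
      · have h2 : k + 1 = i := by omega
        rw [if_neg h1]
        subst h2
        rw [hσw_i, sub_zero] at hkey
        have : (p : MvPolynomial ℕ ℤ_[p]) ^ k * G k
            = (p : MvPolynomial ℕ ℤ_[p]) ^ k * (C (p : ℤ_[p]) * X (k + 1)) := by
          rw [hkey, pow_succ, mul_comm ((p : MvPolynomial ℕ ℤ_[p]) ^ k) _]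
          rw [map_natCast (C : ℤ_[p] →+* MvPolynomial ℕ ℤ_[p]) p]
          ring
        exact mul_left_cancel₀ (pow_ne_zero _ hpA) this
  -- compute G i minus (X i ^ p - X i) as p times something
  have hGi : ∃ h : MvPolynomial ℕ ℤ_[p],
      G i - (X i ^ p - X i) = C (p : ℤ_[p]) * h := by
    have hkey := key i
    rw [Finset.sum_range_succ, Nat.sub_self, pow_zero, pow_one, hσw_i, hσw_i1] at hkey
    rcases Nat.eq_zero_or_pos i with hi0 | hi1
    · subst hi0
      refine ⟨X 1, ?_⟩
      simp only [range_zero, Finset.sum_empty, zero_add, pow_zero, one_mul] at hkey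
      rw [hkey, map_natCast (C : ℤ_[p] →+* MvPolynomial ℕ ℤ_[p]) p]
      ring
    · refine ⟨X (i + 1) - C ((p : ℤ_[p]) ^ (p - 2)) * X i ^ p, ?_⟩
      have hz : ∑ j ∈ range i, (p : MvPolynomial ℕ ℤ_[p]) ^ j * G j ^ p ^ (i - j)
          = (p : MvPolynomial ℕ ℤ_[p]) ^ (i - 1 + p) * X i ^ p := by
        rw [Finset.sum_eq_single (i - 1)]
        · rw [hGlt (i - 1) (by omega), if_neg (by omega),
            show i - (i - 1) = 1 from by omega, pow_one, mul_pow,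
            map_natCast (C : ℤ_[p] →+* MvPolynomial ℕ ℤ_[p]) p, pow_add]
          ring
        · intro j hj hji
          rw [mem_range] at hj
          rw [hGlt j hj, if_pos (by omega), zero_pow (hppos _), mul_zero]
        · intro h; exact absurd (mem_range.mpr (by omega)) h
      rw [hz] at hkey
      have hcancel : (p : MvPolynomial ℕ ℤ_[p]) ^ i * G i
          = (p : MvPolynomial ℕ ℤ_[p]) ^ i
            * ((X i ^ p - X i) + C (p : ℤ_[p]) * (X (i + 1) - C ((p : ℤ_[p]) ^ (p - 2)) * X i ^ p)) := by
        have e1 : (p : MvPolynomial ℕ ℤ_[p]) ^ (i - 1 + p)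
            = (p : MvPolynomial ℕ ℤ_[p]) ^ i * (p : MvPolynomial ℕ ℤ_[p])
              * (p : MvPolynomial ℕ ℤ_[p]) ^ (p - 2) := by
          rw [← pow_succ, ← pow_add]
          congr 1
          have := hp.two_le
          omega
        have hGi' : (p : MvPolynomial ℕ ℤ_[p]) ^ i * G i
            = (p : MvPolynomial ℕ ℤ_[p]) ^ i * X i ^ p
              + (p : MvPolynomial ℕ ℤ_[p]) ^ (i + 1) * X (i + 1)
              - (p : MvPolynomial ℕ ℤ_[p]) ^ i * X i
              - (p : MvPolynomial ℕ ℤ_[p]) ^ (i - 1 + p) * X i ^ p := by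
          rw [eq_sub_iff_add_eq, ← hkey]; ring
        rw [hGi', e1, pow_succ, ← map_natCast (C : ℤ_[p] →+* MvPolynomial ℕ ℤ_[p]) p, map_pow]
        ring
      have := mul_left_cancel₀ (pow_ne_zero i hpA) hcancel
      rw [this]
      ring
  -- final assembly via the quotient ring
  set J : Ideal (MvPolynomial ℕ ℤ_[p]) := Ideal.span
      (insert (MvPolynomial.C (p : ℤ_[p]))
        ((fun j : ℕ => (X j : MvPolynomial ℕ ℤ_[p])) '' Set.Iio i)) with hJ
  show F i - (X i ^ p - X i) ∈ J
  rw [← Ideal.Quotient.eq]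
  have hq : (Ideal.Quotient.mk J).comp τ.toRingHom = Ideal.Quotient.mk J := by
    apply MvPolynomial.ringHom_ext
    · intro a
      simp [hτ]
    · intro k
      simp only [RingHom.comp_apply, AlgHom.toRingHom_eq_coe, RingHom.coe_coe, hτ, aeval_X]
      by_cases hk : k < i
      · rw [if_pos hk]
        rw [map_zero]
        symm
        rw [Ideal.Quotient.eq_zero_iff_mem]
        exact Ideal.subset_span (Set.mem_insert_iff.mpr (Or.inr ⟨k, hk, rfl⟩))
      · rw [if_neg hk]
  have hq' : ∀ g, Ideal.Quotient.mk J (τ g) = Ideal.Quotient.mk J g := fun g =>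
    RingHom.congr_fun hq g
  obtain ⟨h, hh⟩ := hGi
  have : Ideal.Quotient.mk J (G i) = Ideal.Quotient.mk J (X i ^ p - X i) := by
    have hCp : Ideal.Quotient.mk J (C (p : ℤ_[p])) = 0 := by
      rw [Ideal.Quotient.eq_zero_iff_mem]
      exact Ideal.subset_span (Set.mem_insert _ _)
    have := congrArg (Ideal.Quotient.mk J) hh
    rw [map_sub, map_mul, hCp, zero_mul, sub_eq_zero] at this
    exact this
  calc Ideal.Quotient.mk J (F i) = Ideal.Quotient.mk J (G i) := (hq' (F i)).symm
    _ = Ideal.Quotient.mk J (X i ^ p - X i) := this
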